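/- Let X be a complex Banach space with dim X = 2 and let 𝒩 = {{0}, N, X} be a non-trivial nest on X. Then for every n ≥ 2 and every Lie n-derivation L : Alg 𝒩 → B(X) there exist a derivation D : Alg 𝒩 → B(X) and a linear map H : Alg 𝒩 → ℂI vanishing on every (n−1)-th commutator p_n(A_1,…,A_n) with A_1,…,A_n ∈ Alg 𝒩 such that L = D + H; moreover, if L is continuous then D and H can be chosen continuous. -/

import Mathlib

open scoped Classical

set_option synthInstance.maxHeartbeats 1000000
set_option maxHeartbeats 1000000

noncomputable section

/-- The `(n-1)`-th commutator polynomial `p_n(x_1, …, x_n)`, defined recursively by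
`p_1(x_1) = x_1` and `p_k(x_1, …, x_k) = [p_{k-1}(x_1, …, x_{k-1}), x_k]`. -/
def commPoly {A : Type*} [NonUnitalNonAssocRing A] : (n : ℕ) → (Fin n → A) → A
  | 0, _ => 0
  | 1, a => a 0
  | n + 2, a =>
      commPoly (n + 1) (fun i => a i.castSucc) * a (Fin.last (n + 1)) -
        a (Fin.last (n + 1)) * commPoly (n + 1) (fun i => a i.castSucc)

/-- A nest of closed subspaces of `X`: it contains `{0}` and `X`, is totally ordered by
inclusion, is closed under arbitrary intersections, and contains the norm-closed linear
span of the union of any subfamily. -/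
structure IsNest {X : Type*} [NormedAddCommGroup X] [NormedSpace ℂ X]
    (𝒩 : Set (Submodule ℂ X)) : Prop where
  closed : ∀ N ∈ 𝒩, IsClosed (N : Set X)
  bot_mem : (⊥ : Submodule ℂ X) ∈ 𝒩
  top_mem : (⊤ : Submodule ℂ X) ∈ 𝒩
  total : ∀ N₁ ∈ 𝒩, ∀ N₂ ∈ 𝒩, N₁ ≤ N₂ ∨ N₂ ≤ N₁
  sInf_mem : ∀ S ⊆ 𝒩, sInf S ∈ 𝒩
  closure_sSup_mem : ∀ S ⊆ 𝒩, (sSup S).topologicalClosure ∈ 𝒩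

/-- The nest algebra `Alg 𝒩` of all bounded operators leaving every member of `𝒩`
invariant. -/
def nestAlgebra {X : Type*} [NormedAddCommGroup X] [NormedSpace ℂ X]
    (𝒩 : Set (Submodule ℂ X)) : Subalgebra ℂ (X →L[ℂ] X) where
  carrier := {T : X →L[ℂ] X | ∀ N ∈ 𝒩, ∀ x ∈ N, T x ∈ N}
  mul_mem' := fun {a b} ha hb N hN x hx => ha N hN _ (hb N hN x hx)
  one_mem' := fun N _ x hx => hx
  add_mem' := fun {a b} ha hb N hN x hx => N.add_mem (ha N hN x hx) (hb N hN x hx)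
  zero_mem' := fun N _ _ _ => N.zero_mem
  algebraMap_mem' := fun r N hN x hx => by
    simpa [Algebra.algebraMap_eq_smul_one] using N.smul_mem r hx

/-- `L` is a Lie `n`-derivation on the subalgebra `𝒜` of `B`:
`L(p_n(a_1,…,a_n)) = ∑_k p_n(a_1, …, a_{k-1}, L(a_k), a_{k+1}, …, a_n)`. -/
def IsLieNDeriv {B : Type*} [Ring B] [Algebra ℂ B] (𝒜 : Subalgebra ℂ B)
    (n : ℕ) (L : ↥𝒜 →ₗ[ℂ] B) : Prop :=
  ∀ a : Fin n → ↥𝒜,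
    L (commPoly n a) =
      ∑ k : Fin n, commPoly n (Function.update (fun i => ((a i : B))) k (L (a k)))

/-- `D` is an (associative) derivation on the subalgebra `𝒜` of `B`. -/
def IsDerivOn {B : Type*} [Ring B] [Algebra ℂ B] (𝒜 : Subalgebra ℂ B)
    (D : ↥𝒜 →ₗ[ℂ] B) : Prop :=
  ∀ a b : ↥𝒜, D (a * b) = D a * (b : B) + (a : B) * D b

set_option linter.unusedSectionVars false
namespace Stmt7

variable {R : Type*} [Ring R] [Algebra ℂ R]

def stp (y w : R) : R := w * y - y * w

lemma stp_zero (y : R) : stp y 0 = 0 := by simp [stp]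

lemma stp_smul (y : R) (c : ℂ) (w : R) : stp y (c • w) = c • stp y w := by
  simp [stp, Algebra.smul_mul_assoc, Algebra.mul_smul_comm, smul_sub]

lemma stp_iter_smul (y : R) (c : ℂ) (w : R) : ∀ m, (stp y)^[m] (c • w) = c • (stp y)^[m] w
  | 0 => rfl
  | m + 1 => by
      rw [Function.iterate_succ_apply', Function.iterate_succ_apply',
        stp_iter_smul y c w m, stp_smul]

lemma stp_iter_zero (y : R) (m : ℕ) : (stp y)^[m] (0 : R) = 0 :=
  Function.iterate_fixed (stp_zero y) m

lemma commPoly_succ (m : ℕ) (a : Fin (m + 2) → R) :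
    commPoly (m + 2) a
      = stp (a (Fin.last (m + 1))) (commPoly (m + 1) fun i => a i.castSucc) := rfl

lemma commPoly_map {R' : Type*} [Ring R'] (f : R →+* R') :
    ∀ (n : ℕ) (a : Fin n → R), f (commPoly n a) = commPoly n fun i => f (a i)
  | 0, a => by simp [commPoly]
  | 1, a => by simp [commPoly]
  | n + 2, a => by
      simp only [commPoly, map_sub, map_mul, commPoly_map f (n + 1)]

lemma cpA : ∀ (m : ℕ) (x y : R),
    commPoly (m + 1) (fun i : Fin (m + 1) => if (i : ℕ) = 0 then x else y)
      = (stp y)^[m] x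
  | 0, x, y => by simp [commPoly]
  | m + 1, x, y => by
      rw [commPoly_succ]
      have h1 : (fun i : Fin (m + 1) =>
          if ((i.castSucc : Fin (m + 2)) : ℕ) = 0 then x else y)
          = (fun i : Fin (m + 1) => if (i : ℕ) = 0 then x else y) := by
        funext i; simp
      have h2 : ((Fin.last (m + 1) : Fin (m + 2)) : ℕ) ≠ 0 := by simp
      simp only [h1, if_neg h2, cpA m x y, Function.iterate_succ_apply']

lemma cpC : ∀ (m k : ℕ), 1 ≤ k → k ≤ m → ∀ x y z : R,
    commPoly (m + 1) (fun i : Fin (m + 1) =>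
        if (i : ℕ) = 0 then x else if (i : ℕ) = k then z else y)
      = (stp y)^[m - k] (stp z ((stp y)^[k - 1] x))
  | 0, k, hk1, hk2, x, y, z => by omega
  | m + 1, k, hk1, hk2, x, y, z => by
      rw [commPoly_succ]
      rcases Nat.eq_or_lt_of_le hk2 with hk | hk
      · -- k = m + 1
        have hlast0 : ((Fin.last (m + 1) : Fin (m + 2)) : ℕ) ≠ 0 := by simp
        have hlastk : ((Fin.last (m + 1) : Fin (m + 2)) : ℕ) = k := by simp [← hk]
        have h1 : (fun i : Fin (m + 1) =>
            if ((i.castSucc : Fin (m + 2)) : ℕ) = 0 then x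
            else if ((i.castSucc : Fin (m + 2)) : ℕ) = k then z else y)
            = (fun i : Fin (m + 1) => if (i : ℕ) = 0 then x else y) := by
          funext i
          have : (i : ℕ) ≠ k := by omega
          simp [this]
        simp only [h1, if_neg hlast0, if_pos hlastk, cpA]
        have h2 : m + 1 - k = 0 := by omega
        have h3 : k - 1 = m := by omega
        rw [h2, h3, Function.iterate_zero_apply]
      · -- k ≤ m
        have hkm : k ≤ m := by omega
        have hlast0 : ((Fin.last (m + 1) : Fin (m + 2)) : ℕ) ≠ 0 := by simp
        have hlastk : ((Fin.last (m + 1) : Fin (m + 2)) : ℕ) ≠ k := by simp; omega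
        have h1 : (fun i : Fin (m + 1) =>
            if ((i.castSucc : Fin (m + 2)) : ℕ) = 0 then x
            else if ((i.castSucc : Fin (m + 2)) : ℕ) = k then z else y)
            = (fun i : Fin (m + 1) =>
              if (i : ℕ) = 0 then x else if (i : ℕ) = k then z else y) := by
          funext i; simp
        rw [h1, if_neg hlast0, if_neg hlastk, cpC m k hk1 hkm x y z,
          show m + 1 - k = (m - k) + 1 from by omega, Function.iterate_succ_apply']


section Ent

variable {X : Type*} [NormedAddCommGroup X] [NormedSpace ℂ X] [CompleteSpace X]
  [FiniteDimensional ℂ X] (b : Module.Basis (Fin 2) ℂ X)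

/-- matrix unit operators -/
def eM (i j : Fin 2) : X →L[ℂ] X :=
  LinearMap.toContinuousLinearMap ((b.coord j).smulRight (b i))

lemma eM_apply (i j : Fin 2) (x : X) : eM b i j x = b.coord j x • b i := rfl

/-- entry extraction -/
def ent (i j : Fin 2) : (X →L[ℂ] X) →ₗ[ℂ] ℂ where
  toFun W := b.coord i (W (b j))
  map_add' := by intro U V; simp
  map_smul' := by intro c U; simp

lemma ent_apply (i j : Fin 2) (W : X →L[ℂ] X) : ent b i j W = b.coord i (W (b j)) := rfl

lemma coord_basis (i j : Fin 2) : b.coord i (b j) = if i = j then 1 else 0 := by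
  rw [Module.Basis.coord_apply, Module.Basis.repr_self, Finsupp.single_apply]
  simp [eq_comm]

lemma repr2 (x : X) : x = b.coord 0 x • b 0 + b.coord 1 x • b 1 := by
  have := b.sum_repr x
  rw [Fin.sum_univ_two] at this
  simp only [Module.Basis.coord_apply]
  exact this.symm

lemma ext_ent {U V : X →L[ℂ] X} (h : ∀ i j, ent b i j U = ent b i j V) : U = V := by
  have hb : ∀ j, U (b j) = V (b j) := by
    intro j
    rw [repr2 b (U (b j)), repr2 b (V (b j))]
    rw [← ent_apply, ← ent_apply, ← ent_apply, ← ent_apply, h 0 j, h 1 j]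
  apply ContinuousLinearMap.coe_injective
  exact b.ext hb

lemma ent_mul (i j : Fin 2) (U V : X →L[ℂ] X) :
    ent b i j (U * V) = ent b i 0 U * ent b 0 j V + ent b i 1 U * ent b 1 j V := by
  simp only [ent_apply, ContinuousLinearMap.mul_apply]
  conv_lhs => rw [repr2 b (V (b j))]
  simp [mul_comm]

lemma ent_mul_eM (i j k l : Fin 2) (W : X →L[ℂ] X) :
    ent b i j (W * eM b k l) = if j = l then ent b i k W else 0 := by
  simp only [ent_apply, ContinuousLinearMap.mul_apply, eM_apply, coord_basis]
  by_cases h : j = l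
  · simp [h]
  · have : l ≠ j := fun hh => h hh.symm
    simp [h, this]

lemma ent_eM_mul (i j k l : Fin 2) (W : X →L[ℂ] X) :
    ent b i j (eM b k l * W) = if i = k then ent b l j W else 0 := by
  simp only [ent_apply, ContinuousLinearMap.mul_apply, eM_apply, map_smul, coord_basis]
  by_cases h : i = k <;> simp [h, smul_eq_mul]

lemma ent_eM (i j k l : Fin 2) :
    ent b i j (eM b k l) = if i = k ∧ j = l then 1 else 0 := by
  simp only [ent_apply, eM_apply, map_smul, coord_basis, smul_eq_mul]
  by_cases h1 : i = k <;> by_cases h2 : j = l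
  · simp [h1, h2]
  · have : l ≠ j := fun hh => h2 hh.symm
    simp [h1, h2, this]
  · simp [h1, h2]
  · have : l ≠ j := fun hh => h2 hh.symm
    simp [h1, h2, this]

lemma ent_one (i j : Fin 2) : ent b i j (1 : X →L[ℂ] X) = if i = j then 1 else 0 := by
  simp only [ent_apply, ContinuousLinearMap.one_apply, coord_basis]

lemma eM_mul (i j k l : Fin 2) :
    eM b i j * eM b k l = if j = k then eM b i l else 0 := by
  apply ext_ent b
  intro p q
  by_cases h : j = k <;>
    simp [ent_mul_eM, ent_eM, h] <;> by_cases h2 : q = l <;> simp [h2] <;> tauto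


lemma ent_stp_eM (i j k l : Fin 2) (W : X →L[ℂ] X) :
    ent b i j (stp (eM b k l) W)
      = (if j = l then ent b i k W else 0) - (if i = k then ent b l j W else 0) := by
  simp [stp, map_sub, ent_mul_eM, ent_eM_mul]

-- S = stp (eM b 1 1)  (ad E₂₂)
lemma ent00_stp11 (W : X →L[ℂ] X) : ent b 0 0 (stp (eM b 1 1) W) = 0 := by
  simp [ent_stp_eM]
lemma ent11_stp11 (W : X →L[ℂ] X) : ent b 1 1 (stp (eM b 1 1) W) = 0 := by
  simp [ent_stp_eM]
lemma ent01_stp11 (W : X →L[ℂ] X) : ent b 0 1 (stp (eM b 1 1) W) = ent b 0 1 W := by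
  simp [ent_stp_eM]
lemma ent10_stp11 (W : X →L[ℂ] X) : ent b 1 0 (stp (eM b 1 1) W) = -ent b 1 0 W := by
  simp [ent_stp_eM]

lemma ent01_iter11 : ∀ (m : ℕ) (W : X →L[ℂ] X),
    ent b 0 1 ((stp (eM b 1 1))^[m] W) = ent b 0 1 W
  | 0, W => rfl
  | m + 1, W => by
      rw [Function.iterate_succ_apply', ent01_stp11, ent01_iter11 m W]
lemma ent10_iter11 : ∀ (m : ℕ) (W : X →L[ℂ] X),
    ent b 1 0 ((stp (eM b 1 1))^[m] W) = (-1 : ℂ) ^ m * ent b 1 0 W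
  | 0, W => by simp
  | m + 1, W => by
      rw [Function.iterate_succ_apply', ent10_stp11, ent10_iter11 m W, pow_succ]
      ring
lemma ent00_iter11 (m : ℕ) (W : X →L[ℂ] X) :
    ent b 0 0 ((stp (eM b 1 1))^[m] W) = if m = 0 then ent b 0 0 W else 0 := by
  cases m with
  | zero => simp
  | succ m => rw [Function.iterate_succ_apply', ent00_stp11]; simp
lemma ent11_iter11 (m : ℕ) (W : X →L[ℂ] X) :
    ent b 1 1 ((stp (eM b 1 1))^[m] W) = if m = 0 then ent b 1 1 W else 0 := by
  cases m with
  | zero => simp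
  | succ m => rw [Function.iterate_succ_apply', ent11_stp11]; simp

-- S' = stp (eM b 0 0)  (ad E₁₁)
lemma ent00_stp00 (W : X →L[ℂ] X) : ent b 0 0 (stp (eM b 0 0) W) = 0 := by
  simp [ent_stp_eM]
lemma ent11_stp00 (W : X →L[ℂ] X) : ent b 1 1 (stp (eM b 0 0) W) = 0 := by
  simp [ent_stp_eM]
lemma ent01_stp00 (W : X →L[ℂ] X) : ent b 0 1 (stp (eM b 0 0) W) = -ent b 0 1 W := by
  simp [ent_stp_eM]
lemma ent10_stp00 (W : X →L[ℂ] X) : ent b 1 0 (stp (eM b 0 0) W) = ent b 1 0 W := by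
  simp [ent_stp_eM]

lemma ent01_iter00 : ∀ (m : ℕ) (W : X →L[ℂ] X),
    ent b 0 1 ((stp (eM b 0 0))^[m] W) = (-1 : ℂ) ^ m * ent b 0 1 W
  | 0, W => by simp
  | m + 1, W => by
      rw [Function.iterate_succ_apply', ent01_stp00, ent01_iter00 m W, pow_succ]
      ring
lemma ent10_iter00 : ∀ (m : ℕ) (W : X →L[ℂ] X),
    ent b 1 0 ((stp (eM b 0 0))^[m] W) = ent b 1 0 W
  | 0, W => rfl
  | m + 1, W => by
      rw [Function.iterate_succ_apply', ent10_stp00, ent10_iter00 m W]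
lemma ent00_iter00 (m : ℕ) (W : X →L[ℂ] X) :
    ent b 0 0 ((stp (eM b 0 0))^[m] W) = if m = 0 then ent b 0 0 W else 0 := by
  cases m with
  | zero => simp
  | succ m => rw [Function.iterate_succ_apply', ent00_stp00]; simp
lemma ent01_stp01 (W : X →L[ℂ] X) :
    ent b 0 1 (stp (eM b 0 1) W) = ent b 0 0 W - ent b 1 1 W := by
  simp [ent_stp_eM]
lemma ent00_stp01 (W : X →L[ℂ] X) : ent b 0 0 (stp (eM b 0 1) W) = -ent b 1 0 W := by
  simp [ent_stp_eM]

-- fixed points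
lemma stp11_e01 : stp (eM b 1 1) (eM b 0 1) = eM b 0 1 := by
  simp [stp, eM_mul]
lemma iter11_e01 (m : ℕ) : (stp (eM b 1 1))^[m] (eM b 0 1) = eM b 0 1 :=
  Function.iterate_fixed (stp11_e01 b) m
lemma stp00_e01 : stp (eM b 0 0) (eM b 0 1) = (-1 : ℂ) • eM b 0 1 := by
  simp [stp, eM_mul]
lemma iter00_e01 : ∀ m : ℕ,
    (stp (eM b 0 0))^[m] (eM b 0 1) = ((-1 : ℂ) ^ m) • eM b 0 1
  | 0 => by simp
  | m + 1 => by
      rw [Function.iterate_succ_apply, stp00_e01, stp_iter_smul, iter00_e01 m,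
        smul_smul, pow_succ]
      ring_nf
lemma stp11_e00 : stp (eM b 1 1) (eM b 0 0) = 0 := by
  simp [stp, eM_mul]
lemma iter11_e00 (m : ℕ) : (stp (eM b 1 1))^[m + 1] (eM b 0 0) = 0 := by
  rw [Function.iterate_succ_apply, stp11_e00, stp_iter_zero]

end Ent


section LieSum

variable {B : Type*} [Ring B] [Algebra ℂ B] (S : Subalgebra ℂ B) (L : ↥S →ₗ[ℂ] B)

lemma commPoly_coe (n : ℕ) (a : Fin n → ↥S) :
    ((commPoly n a : ↥S) : B) = commPoly n fun i => (a i : B) :=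
  commPoly_map (S.val.toRingHom) n a

lemma cp_headtail_coe (m : ℕ) (x y : ↥S) :
    ((commPoly (m + 2) (fun i : Fin (m + 2) => if (i : ℕ) = 0 then x else y) : ↥S) : B)
      = (stp (y : B))^[m + 1] (x : B) := by
  rw [commPoly_coe]
  have h : (fun i : Fin (m + 2) => ((if (i : ℕ) = 0 then x else y : ↥S) : B))
      = fun i : Fin (m + 1 + 1) => if (i : ℕ) = 0 then (x : B) else (y : B) := by
    funext i; exact apply_ite _ _ _ _
  rw [h]
  exact cpA (m + 1) _ _

lemma cp_t3_coe (m : ℕ) (x y : ↥S) :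
    ((commPoly (m + 2) (fun i : Fin (m + 2) =>
        if (i : ℕ) = 0 then x else if (i : ℕ) = m + 1 then x else y) : ↥S) : B)
      = stp (x : B) ((stp (y : B))^[m] (x : B)) := by
  rw [commPoly_coe]
  have h : (fun i : Fin (m + 2) =>
      ((if (i : ℕ) = 0 then x else if (i : ℕ) = m + 1 then x else y : ↥S) : B))
      = fun i : Fin (m + 2) => if (i : ℕ) = 0 then (x : B)
          else if (i : ℕ) = m + 1 then (x : B) else (y : B) := by
    funext i
    by_cases h0 : (i : ℕ) = 0 <;> by_cases h1 : (i : ℕ) = m + 1 <;> simp [h0, h1]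
  rw [h, commPoly_succ]
  have hlast : (if ((Fin.last (m + 1) : Fin (m + 2)) : ℕ) = 0 then (x : B)
      else if ((Fin.last (m + 1) : Fin (m + 2)) : ℕ) = m + 1 then (x : B) else (y : B))
      = (x : B) := by
    simp
  have hfront : (fun i : Fin (m + 1) =>
      if ((i.castSucc : Fin (m + 2)) : ℕ) = 0 then (x : B)
      else if ((i.castSucc : Fin (m + 2)) : ℕ) = m + 1 then (x : B) else (y : B))
      = fun i : Fin (m + 1) => if (i : ℕ) = 0 then (x : B) else (y : B) := by
    funext i
    have : (i : ℕ) ≠ m + 1 := by have := i.isLt; omega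
    simp [this]
  rw [hlast, hfront]
  congr 1
  exact cpA m _ _

lemma sum_update_headtail (m : ℕ) (x y : ↥S) :
    (∑ k : Fin (m + 2), commPoly (m + 2)
      (Function.update
        (fun i : Fin (m + 2) => ((if (i : ℕ) = 0 then x else y : ↥S) : B))
        k (L (if (k : ℕ) = 0 then x else y))))
    = (stp (y : B))^[m + 1] (L x)
      + ∑ j : Fin (m + 1),
          (stp (y : B))^[m - (j : ℕ)] (stp (L y) ((stp (y : B))^[(j : ℕ)] (x : B))) := by
  rw [Fin.sum_univ_succ]
  congr 1
  · -- k = 0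
    have h0 : (if ((0 : Fin (m + 2)) : ℕ) = 0 then x else y) = x := by simp
    rw [h0]
    have hupd : Function.update
        (fun i : Fin (m + 2) => ((if (i : ℕ) = 0 then x else y : ↥S) : B)) 0 (L x)
        = fun i : Fin (m + 1 + 1) => if (i : ℕ) = 0 then L x else (y : B) := by
      funext i
      by_cases hi : i = 0
      · subst hi; simp
      · have hv : (i : ℕ) ≠ 0 := by intro h; apply hi; ext; simp [h]
        rw [Function.update_of_ne hi]
        simp [hv]
    rw [hupd]
    exact cpA (m + 1) _ _
  · apply Finset.sum_congr rfl
    intro j _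
    have hy : (if ((j.succ : Fin (m + 2)) : ℕ) = 0 then x else y) = y := by
      simp [Fin.val_succ]
    rw [hy]
    have hupd : Function.update
        (fun i : Fin (m + 2) => ((if (i : ℕ) = 0 then x else y : ↥S) : B)) j.succ (L y)
        = fun i : Fin (m + 1 + 1) => if (i : ℕ) = 0 then (x : B)
            else if (i : ℕ) = (j : ℕ) + 1 then L y else (y : B) := by
      funext i
      by_cases hi : i = j.succ
      · subst hi
        simp [Fin.val_succ]
      · rw [Function.update_of_ne hi]
        by_cases h0 : (i : ℕ) = 0
        · simp [h0]
        · have hne : (i : ℕ) ≠ (j : ℕ) + 1 := by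
            intro hc
            exact hi (Fin.ext (by simp [hc, Fin.val_succ]))
          simp [h0, hne]
    rw [hupd]
    have h1 : m + 1 - ((j : ℕ) + 1) = m - (j : ℕ) := by omega
    have h2 : (j : ℕ) + 1 - 1 = (j : ℕ) := by omega
    have hc := cpC (m + 1) ((j : ℕ) + 1) (by omega)
      (by have := j.isLt; omega) (x : B) (y : B) (L y)
    rw [h1, h2] at hc
    exact hc

lemma sum_update_t3 (m : ℕ) (x y : ↥S) :
    (∑ k : Fin (m + 2), commPoly (m + 2)
      (Function.update
        (fun i : Fin (m + 2) =>
          ((if (i : ℕ) = 0 then x else if (i : ℕ) = m + 1 then x else y : ↥S) : B))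
        k (L (if (k : ℕ) = 0 then x else if (k : ℕ) = m + 1 then x else y))))
    = stp (x : B) ((stp (y : B))^[m] (L x))
      + ∑ j : Fin (m + 1),
          (if (j : ℕ) = m then stp (L x) ((stp (y : B))^[m] (x : B))
           else stp (x : B)
             ((stp (y : B))^[m - 1 - (j : ℕ)] (stp (L y) ((stp (y : B))^[(j : ℕ)] (x : B))))) := by
  rw [Fin.sum_univ_succ]
  congr 1
  · -- k = 0
    have h0 : (if ((0 : Fin (m + 2)) : ℕ) = 0 then x
        else if ((0 : Fin (m + 2)) : ℕ) = m + 1 then x else y) = x := by simp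
    rw [h0]
    have hupd : Function.update
        (fun i : Fin (m + 2) =>
          ((if (i : ℕ) = 0 then x else if (i : ℕ) = m + 1 then x else y : ↥S) : B))
        0 (L x)
        = fun i : Fin (m + 2) => if (i : ℕ) = 0 then L x
            else if (i : ℕ) = m + 1 then (x : B) else (y : B) := by
      funext i
      by_cases hi : i = 0
      · subst hi; simp
      · have hv : (i : ℕ) ≠ 0 := by intro h; apply hi; ext; simp [h]
        rw [Function.update_of_ne hi]
        by_cases h1 : (i : ℕ) = m + 1 <;> simp [hv, h1]
    rw [hupd, commPoly_succ]
    have hlast : (if ((Fin.last (m + 1) : Fin (m + 2)) : ℕ) = 0 then L x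
        else if ((Fin.last (m + 1) : Fin (m + 2)) : ℕ) = m + 1 then (x : B) else (y : B))
        = (x : B) := by simp
    have hfront : (fun i : Fin (m + 1) =>
        if ((i.castSucc : Fin (m + 2)) : ℕ) = 0 then L x
        else if ((i.castSucc : Fin (m + 2)) : ℕ) = m + 1 then (x : B) else (y : B))
        = fun i : Fin (m + 1) => if (i : ℕ) = 0 then L x else (y : B) := by
      funext i
      have : (i : ℕ) ≠ m + 1 := by have := i.isLt; omega
      simp [this]
    rw [hlast, hfront]
    congr 1
    exact cpA m _ _
  · apply Finset.sum_congr rfl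
    intro j _
    by_cases hj : (j : ℕ) = m
    · -- k = j.succ is the last position
      have hjs : j.succ = Fin.last (m + 1) := by
        apply Fin.ext; simp [Fin.val_succ, hj]
      have harg : (if ((j.succ : Fin (m + 2)) : ℕ) = 0 then x
          else if ((j.succ : Fin (m + 2)) : ℕ) = m + 1 then x else y) = x := by
        simp [Fin.val_succ, hj]
      rw [harg, if_pos hj]
      have hupd : Function.update
          (fun i : Fin (m + 2) =>
            ((if (i : ℕ) = 0 then x else if (i : ℕ) = m + 1 then x else y : ↥S) : B))
          j.succ (L x)
          = fun i : Fin (m + 2) => if (i : ℕ) = m + 1 then L x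
              else if (i : ℕ) = 0 then (x : B) else (y : B) := by
        funext i
        by_cases hi : i = j.succ
        · subst hi
          simp [Fin.val_succ, hj]
        · have hv : (i : ℕ) ≠ m + 1 := by
            intro hc
            exact hi (Fin.ext (by simp [Fin.val_succ, hj, hc]))
          rw [Function.update_of_ne hi]
          by_cases h0 : (i : ℕ) = 0 <;> simp [hv, h0]
      rw [hupd, commPoly_succ]
      have hlast : (if ((Fin.last (m + 1) : Fin (m + 2)) : ℕ) = m + 1 then L x
          else if ((Fin.last (m + 1) : Fin (m + 2)) : ℕ) = 0 then (x : B) else (y : B))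
          = L x := by simp
      have hfront : (fun i : Fin (m + 1) =>
          if ((i.castSucc : Fin (m + 2)) : ℕ) = m + 1 then L x
          else if ((i.castSucc : Fin (m + 2)) : ℕ) = 0 then (x : B) else (y : B))
          = fun i : Fin (m + 1) => if (i : ℕ) = 0 then (x : B) else (y : B) := by
        funext i
        have : (i : ℕ) ≠ m + 1 := by have := i.isLt; omega
        simp [this]
      rw [hlast, hfront]
      congr 1
      exact cpA m _ _
    · -- middle position
      have hjm : (j : ℕ) < m := by have := j.isLt; omega
      have harg : (if ((j.succ : Fin (m + 2)) : ℕ) = 0 then x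
          else if ((j.succ : Fin (m + 2)) : ℕ) = m + 1 then x else y) = y := by
        have h1 : (j : ℕ) + 1 ≠ m + 1 := by omega
        simp [Fin.val_succ, h1, hj]
      rw [harg, if_neg hj]
      have hupd : Function.update
          (fun i : Fin (m + 2) =>
            ((if (i : ℕ) = 0 then x else if (i : ℕ) = m + 1 then x else y : ↥S) : B))
          j.succ (L y)
          = fun i : Fin (m + 2) =>
              if (i : ℕ) = m + 1 then (x : B)
              else if (i : ℕ) = 0 then (x : B)
              else if (i : ℕ) = (j : ℕ) + 1 then L y else (y : B) := by
        funext i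
        by_cases hi : i = j.succ
        · subst hi
          have h1 : (j : ℕ) + 1 ≠ m + 1 := by omega
          simp [Fin.val_succ, h1, hj]
        · rw [Function.update_of_ne hi]
          have hne : (i : ℕ) ≠ (j : ℕ) + 1 := by
            intro hc
            exact hi (Fin.ext (by simp [hc, Fin.val_succ]))
          by_cases h0 : (i : ℕ) = 0
          · have : (i : ℕ) ≠ m + 1 := by omega
            simp [h0, this]
          · by_cases h1 : (i : ℕ) = m + 1 <;> simp [h0, h1, hne]
      rw [hupd, commPoly_succ]
      have hlast : (if ((Fin.last (m + 1) : Fin (m + 2)) : ℕ) = m + 1 then (x : B)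
          else if ((Fin.last (m + 1) : Fin (m + 2)) : ℕ) = 0 then (x : B)
          else if ((Fin.last (m + 1) : Fin (m + 2)) : ℕ) = (j : ℕ) + 1 then L y else (y : B))
          = (x : B) := by simp
      have hfront : (fun i : Fin (m + 1) =>
          if ((i.castSucc : Fin (m + 2)) : ℕ) = m + 1 then (x : B)
          else if ((i.castSucc : Fin (m + 2)) : ℕ) = 0 then (x : B)
          else if ((i.castSucc : Fin (m + 2)) : ℕ) = (j : ℕ) + 1 then L y else (y : B))
          = fun i : Fin (m + 1) => if (i : ℕ) = 0 then (x : B)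
              else if (i : ℕ) = (j : ℕ) + 1 then L y else (y : B) := by
        funext i
        have : (i : ℕ) ≠ m + 1 := by have := i.isLt; omega
        simp [this]
      rw [hlast, hfront]
      have h1 : m - ((j : ℕ) + 1) = m - 1 - (j : ℕ) := by omega
      have h2 : (j : ℕ) + 1 - 1 = (j : ℕ) := by omega
      have hc := cpC m ((j : ℕ) + 1) (by omega) (by omega) (x : B) (y : B) (L y)
      rw [h1, h2] at hc
      rw [hc]

end LieSum

end Stmt7

set_option maxHeartbeats 8000000 in
theorem statement7_aux {X : Type*} [NormedAddCommGroup X] [NormedSpace ℂ X] [CompleteSpace X]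
    (hdim : Module.rank ℂ X = 2)
    (𝒩 : Set (Submodule ℂ X)) (hnest : IsNest 𝒩)
    (N : Submodule ℂ X) (h𝒩 : 𝒩 = ({⊥, N, ⊤} : Set (Submodule ℂ X)))
    (hNbot : N ≠ ⊥) (hNtop : N ≠ ⊤)
    (n : ℕ) (hn : 2 ≤ n)
    (L : ↥(nestAlgebra 𝒩) →ₗ[ℂ] (X →L[ℂ] X))
    (hL : IsLieNDeriv (nestAlgebra 𝒩) n L) :
    (∃ D H : ↥(nestAlgebra 𝒩) →ₗ[ℂ] (X →L[ℂ] X),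
        IsDerivOn (nestAlgebra 𝒩) D ∧
        (∀ a : ↥(nestAlgebra 𝒩), ∃ c : ℂ, H a = c • (1 : X →L[ℂ] X)) ∧
        (∀ a : Fin n → ↥(nestAlgebra 𝒩), H (commPoly n a) = 0) ∧
        L = D + H) ∧
    (Continuous L →
      ∃ D H : ↥(nestAlgebra 𝒩) →ₗ[ℂ] (X →L[ℂ] X),
        IsDerivOn (nestAlgebra 𝒩) D ∧
        (∀ a : ↥(nestAlgebra 𝒩), ∃ c : ℂ, H a = c • (1 : X →L[ℂ] X)) ∧
        (∀ a : Fin n → ↥(nestAlgebra 𝒩), H (commPoly n a) = 0) ∧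
        L = D + H ∧ Continuous D ∧ Continuous H) := by
  classical
  have hfd : FiniteDimensional ℂ X := FiniteDimensional.of_rank_eq_nat (n := 2) (by exact_mod_cast hdim)
  have hfr : Module.finrank ℂ X = 2 := Module.finrank_eq_of_rank_eq (by exact_mod_cast hdim)
  obtain ⟨v0, hv0N, hv0⟩ := Submodule.exists_mem_ne_zero_of_ne_bot hNbot
  obtain ⟨v1, hv1⟩ : ∃ v1, v1 ∉ N := by
    by_contra hc
    push_neg at hc
    exact hNtop (Submodule.eq_top_iff'.2 hc)
  have hli : LinearIndependent ℂ ![v0, v1] := by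
    rw [LinearIndependent.pair_iff]
    intro s t hst
    by_cases ht : t = 0
    · subst ht
      simp only [zero_smul, add_zero] at hst
      rcases (by simpa using hst : s = 0 ∨ v0 = 0) with h | h
      · exact ⟨h, rfl⟩
      · exact absurd h hv0
    · exfalso
      apply hv1
      have h3 : s • v0 = -(t • v1) := add_eq_zero_iff_eq_neg.1 hst
      have h4 : t • v1 = (-s) • v0 := by rw [neg_smul, h3, neg_neg]
      have h5 : v1 = (t⁻¹ * (-s)) • v0 := by
        calc v1 = (t⁻¹ * t) • v1 := by rw [inv_mul_cancel₀ ht, one_smul]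
        _ = t⁻¹ • (t • v1) := by rw [mul_smul]
        _ = t⁻¹ • ((-s) • v0) := by rw [h4]
        _ = (t⁻¹ * (-s)) • v0 := by rw [mul_smul]
      rw [h5]
      exact N.smul_mem _ hv0N
  let b : Module.Basis (Fin 2) ℂ X :=
    basisOfLinearIndependentOfCardEqFinrank hli (by rw [hfr]; rfl)
  have hb : ⇑b = ![v0, v1] := coe_basisOfLinearIndependentOfCardEqFinrank hli _
  have hb0 : b 0 = v0 := by rw [hb]; rfl
  have hb1 : b 1 = v1 := by rw [hb]; rfl
  have hb0N : b 0 ∈ N := hb0 ▸ hv0N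
  have hb1N : b 1 ∉ N := hb1 ▸ hv1
  -- membership in N via coordinates
  have memN_iff : ∀ v : X, v ∈ N ↔ b.coord 1 v = 0 := by
    intro v
    constructor
    · intro hv
      by_contra hc
      apply hb1N
      have h1 : (b.coord 1 v) • b 1 = v - b.coord 0 v • b 0 := by
        rw [eq_sub_iff_add_eq, add_comm]
        exact (Stmt7.repr2 b v).symm
      have h2 : b 1 = (b.coord 1 v)⁻¹ • (v - b.coord 0 v • b 0) := by
        rw [← h1, inv_smul_smul₀ hc]
      rw [h2]
      exact N.smul_mem _ (N.sub_mem hv (N.smul_mem _ hb0N))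
    · intro hv
      have hr := Stmt7.repr2 b v
      rw [hv, zero_smul, add_zero] at hr
      rw [hr]
      exact N.smul_mem _ hb0N
  -- membership in the nest algebra
  have memA_iff : ∀ T : X →L[ℂ] X, T ∈ nestAlgebra 𝒩 ↔ Stmt7.ent b 1 0 T = 0 := by
    intro T
    constructor
    · intro hT
      have hN𝒩 : N ∈ 𝒩 := by rw [h𝒩]; simp
      have := hT N hN𝒩 (b 0) hb0N
      exact (memN_iff _).1 this
    · intro hT M hM x hx
      rw [h𝒩] at hM
      simp only [Set.mem_insert_iff, Set.mem_singleton_iff] at hM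
      rcases hM with rfl | rfl | rfl
      · simp only [Submodule.mem_bot] at hx ⊢
        rw [hx]; exact map_zero T
      · rw [memN_iff] at hx ⊢
        have hxe := Stmt7.repr2 b x
        rw [hx, zero_smul, add_zero] at hxe
        rw [hxe]
        rw [map_smul, map_smul]
        rw [Stmt7.ent_apply] at hT
        rw [hT]
        simp
      · trivial
  -- matrix units in the nest algebra
  have hmem00 : Stmt7.eM b 0 0 ∈ nestAlgebra 𝒩 := (memA_iff _).2 (by
    rw [Stmt7.ent_eM]; simp)
  have hmem01 : Stmt7.eM b 0 1 ∈ nestAlgebra 𝒩 := (memA_iff _).2 (by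
    rw [Stmt7.ent_eM]; simp)
  have hmem11 : Stmt7.eM b 1 1 ∈ nestAlgebra 𝒩 := (memA_iff _).2 (by
    rw [Stmt7.ent_eM]; simp)
  obtain ⟨E00, hE00coe⟩ : ∃ u : ↥(nestAlgebra 𝒩), (u : X →L[ℂ] X) = Stmt7.eM b 0 0 :=
    ⟨⟨_, hmem00⟩, rfl⟩
  obtain ⟨E01, hE01coe⟩ : ∃ u : ↥(nestAlgebra 𝒩), (u : X →L[ℂ] X) = Stmt7.eM b 0 1 :=
    ⟨⟨_, hmem01⟩, rfl⟩
  obtain ⟨E11, hE11coe⟩ : ∃ u : ↥(nestAlgebra 𝒩), (u : X →L[ℂ] X) = Stmt7.eM b 1 1 :=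
    ⟨⟨_, hmem11⟩, rfl⟩
  obtain ⟨m, rfl⟩ : ∃ m, n = m + 2 := ⟨n - 2, by omega⟩
  have hu1 : ((-1 : ℂ) ^ m) * ((-1 : ℂ) ^ m) = 1 := by
    rw [← pow_add]; exact Even.neg_one_pow ⟨m, rfl⟩
  -- ================= Identity 1 : tuple (E01, E11, ..., E11) ==============
  have id1 := hL (fun i : Fin (m + 2) => if (i : ℕ) = 0 then E01 else E11)
  beta_reduce at id1
  rw [show (commPoly (m + 2) fun i : Fin (m + 2) => if (i : ℕ) = 0 then E01 else E11)
      = E01 by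
    apply Subtype.ext
    rw [Stmt7.cp_headtail_coe, hE11coe, hE01coe]
    exact Stmt7.iter11_e01 b (m + 1)] at id1
  rw [Stmt7.sum_update_headtail] at id1
  rw [hE01coe, hE11coe] at id1
  simp only [Stmt7.iter11_e01 b] at id1
  -- entry (0,0)
  have e100 := congrArg (fun W => Stmt7.ent b 0 0 W) id1
  simp only [map_add, map_sum] at e100
  rw [Stmt7.ent00_iter11] at e100
  rw [Finset.sum_congr rfl (fun (j : Fin (m + 1)) _ => show
      Stmt7.ent b 0 0 ((Stmt7.stp (Stmt7.eM b 1 1))^[m - (j : ℕ)]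
        (Stmt7.stp (L E11) (Stmt7.eM b 0 1)))
      = if j = Fin.last m then Stmt7.ent b 1 0 (L E11) else 0 by
    by_cases hj : (j : ℕ) = m
    · rw [show m - (j : ℕ) = 0 by omega, if_pos (Fin.ext (by simp [hj]))]
      simp only [Function.iterate_zero_apply]
      simp [Stmt7.stp, map_sub, Stmt7.ent_eM_mul, Stmt7.ent_mul_eM]
    · obtain ⟨p, hp⟩ : ∃ p, m - (j : ℕ) = p + 1 := ⟨m - (j : ℕ) - 1, by
        have := j.isLt; omega⟩
      rw [hp, if_neg (by simp [Fin.ext_iff]; omega)]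
      rw [Function.iterate_succ_apply', Stmt7.ent00_stp11])] at e100
  rw [Finset.sum_ite_eq' Finset.univ (Fin.last m)
      (fun _ => Stmt7.ent b 1 0 (L E11))] at e100
  simp only [Finset.mem_univ, if_true, if_neg (Nat.succ_ne_zero m), zero_add] at e100
  -- e100 : ent00 (L E01) = ent10 (L E11)
  -- entry (1,1)
  have e111 := congrArg (fun W => Stmt7.ent b 1 1 W) id1
  simp only [map_add, map_sum] at e111
  rw [Stmt7.ent11_iter11] at e111
  rw [Finset.sum_congr rfl (fun (j : Fin (m + 1)) _ => show
      Stmt7.ent b 1 1 ((Stmt7.stp (Stmt7.eM b 1 1))^[m - (j : ℕ)]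
        (Stmt7.stp (L E11) (Stmt7.eM b 0 1)))
      = if j = Fin.last m then -Stmt7.ent b 1 0 (L E11) else 0 by
    by_cases hj : (j : ℕ) = m
    · rw [show m - (j : ℕ) = 0 by omega, if_pos (Fin.ext (by simp [hj]))]
      simp only [Function.iterate_zero_apply]
      simp [Stmt7.stp, map_sub, Stmt7.ent_eM_mul, Stmt7.ent_mul_eM]
    · obtain ⟨p, hp⟩ : ∃ p, m - (j : ℕ) = p + 1 := ⟨m - (j : ℕ) - 1, by
        have := j.isLt; omega⟩
      rw [hp, if_neg (by simp [Fin.ext_iff]; omega)]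
      rw [Function.iterate_succ_apply', Stmt7.ent11_stp11])] at e111
  rw [Finset.sum_ite_eq' Finset.univ (Fin.last m)
      (fun _ => -Stmt7.ent b 1 0 (L E11))] at e111
  simp only [Finset.mem_univ, if_true, if_neg (Nat.succ_ne_zero m), zero_add] at e111
  -- entry (0,1)
  have e101 := congrArg (fun W => Stmt7.ent b 0 1 W) id1
  simp only [map_add, map_sum] at e101
  rw [Stmt7.ent01_iter11] at e101
  rw [Finset.sum_congr rfl (fun (j : Fin (m + 1)) _ => show
      Stmt7.ent b 0 1 ((Stmt7.stp (Stmt7.eM b 1 1))^[m - (j : ℕ)]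
        (Stmt7.stp (L E11) (Stmt7.eM b 0 1)))
      = Stmt7.ent b 1 1 (L E11) - Stmt7.ent b 0 0 (L E11) by
    rw [Stmt7.ent01_iter11]
    simp [Stmt7.stp, map_sub, Stmt7.ent_eM_mul, Stmt7.ent_mul_eM])] at e101
  rw [Finset.sum_const, Finset.card_univ, Fintype.card_fin] at e101
  have F2 : Stmt7.ent b 0 0 (L E11) = Stmt7.ent b 1 1 (L E11) := by
    have h2 : ((m + 1 : ℕ) : ℂ) * (Stmt7.ent b 1 1 (L E11) - Stmt7.ent b 0 0 (L E11))
        = 0 := by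
      have := e101
      rw [nsmul_eq_mul] at this
      linear_combination -this
    have h3 : ((m + 1 : ℕ) : ℂ) ≠ 0 := Nat.cast_ne_zero.2 (Nat.succ_ne_zero m)
    rcases mul_eq_zero.1 h2 with h | h
    · exact absurd h h3
    · linear_combination -h
  -- entry (1,0)
  have e110 := congrArg (fun W => Stmt7.ent b 1 0 W) id1
  simp only [map_add, map_sum] at e110
  rw [Stmt7.ent10_iter11] at e110
  rw [Finset.sum_congr rfl (fun (j : Fin (m + 1)) _ => show
      Stmt7.ent b 1 0 ((Stmt7.stp (Stmt7.eM b 1 1))^[m - (j : ℕ)]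
        (Stmt7.stp (L E11) (Stmt7.eM b 0 1)))
      = 0 by
    rw [Stmt7.ent10_iter11]
    simp [Stmt7.stp, map_sub, Stmt7.ent_eM_mul, Stmt7.ent_mul_eM])] at e110
  rw [Finset.sum_const] at e110
  simp only [smul_zero, add_zero] at e110
  -- e110 : ent10 (L E01) = (-1)^(m+1) * ent10 (L E01)
  -- ================= Identity 2 : tuple (E01, E00, ..., E00) ==============
  have id2 := hL (fun i : Fin (m + 2) => if (i : ℕ) = 0 then E01 else E00)
  beta_reduce at id2
  rw [show (commPoly (m + 2) fun i : Fin (m + 2) => if (i : ℕ) = 0 then E01 else E00)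
      = ((-1 : ℂ) ^ (m + 1)) • E01 by
    apply Subtype.ext
    rw [Stmt7.cp_headtail_coe, hE00coe, hE01coe, SetLike.val_smul, hE01coe]
    exact Stmt7.iter00_e01 b (m + 1)] at id2
  rw [map_smul] at id2
  rw [Stmt7.sum_update_headtail] at id2
  rw [hE01coe, hE00coe] at id2
  simp only [Stmt7.iter00_e01 b, Stmt7.stp_smul, Stmt7.stp_iter_smul] at id2
  -- entry (0,0)
  have e200 := congrArg (fun W => Stmt7.ent b 0 0 W) id2
  simp only [map_add, map_sum, map_smul, smul_eq_mul] at e200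
  rw [Stmt7.ent00_iter00] at e200
  rw [Finset.sum_congr rfl (fun (j : Fin (m + 1)) _ => show
      (-1 : ℂ) ^ (j : ℕ) * Stmt7.ent b 0 0 ((Stmt7.stp (Stmt7.eM b 0 0))^[m - (j : ℕ)]
        (Stmt7.stp (L E00) (Stmt7.eM b 0 1)))
      = if j = Fin.last m then (-1 : ℂ) ^ m * Stmt7.ent b 1 0 (L E00) else 0 by
    by_cases hj : (j : ℕ) = m
    · rw [show m - (j : ℕ) = 0 by omega, if_pos (Fin.ext (by simp [hj]))]
      simp only [Function.iterate_zero_apply, hj]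
      congr 1
      simp [Stmt7.stp, map_sub, Stmt7.ent_eM_mul, Stmt7.ent_mul_eM]
    · obtain ⟨p, hp⟩ : ∃ p, m - (j : ℕ) = p + 1 := ⟨m - (j : ℕ) - 1, by
        have := j.isLt; omega⟩
      rw [hp, if_neg (by simp [Fin.ext_iff]; omega)]
      rw [Function.iterate_succ_apply', Stmt7.ent00_stp00, mul_zero])] at e200
  rw [Finset.sum_ite_eq' Finset.univ (Fin.last m)
      (fun _ => (-1 : ℂ) ^ m * Stmt7.ent b 1 0 (L E00))] at e200
  simp only [Finset.mem_univ, if_true, if_neg (Nat.succ_ne_zero m), zero_add] at e200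
  -- e200 : (-1)^(m+1) * ent00 (L E01) = (-1)^m * ent10 (L E00)
  have F3 : Stmt7.ent b 0 0 (L E01) = -Stmt7.ent b 1 0 (L E00) := by
    linear_combination (-((-1:ℂ)^m)) * e200
      - (Stmt7.ent b 0 0 (L E01) + Stmt7.ent b 1 0 (L E00)) * hu1
  -- entry (0,1)
  have e201 := congrArg (fun W => Stmt7.ent b 0 1 W) id2
  simp only [map_add, map_sum, map_smul, smul_eq_mul] at e201
  rw [Stmt7.ent01_iter00] at e201
  rw [Finset.sum_congr rfl (fun (j : Fin (m + 1)) _ => show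
      (-1 : ℂ) ^ (j : ℕ) * Stmt7.ent b 0 1 ((Stmt7.stp (Stmt7.eM b 0 0))^[m - (j : ℕ)]
        (Stmt7.stp (L E00) (Stmt7.eM b 0 1)))
      = (-1 : ℂ) ^ m * (Stmt7.ent b 1 1 (L E00) - Stmt7.ent b 0 0 (L E00)) by
    rw [Stmt7.ent01_iter00, ← mul_assoc, ← pow_add,
      show (j : ℕ) + (m - (j : ℕ)) = m from by have := j.isLt; omega]
    congr 1
    simp [Stmt7.stp, map_sub, Stmt7.ent_eM_mul, Stmt7.ent_mul_eM])] at e201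
  rw [Finset.sum_const, Finset.card_univ, Fintype.card_fin, nsmul_eq_mul] at e201
  have F1 : Stmt7.ent b 0 0 (L E00) = Stmt7.ent b 1 1 (L E00) := by
    have h2 : ((m + 1 : ℕ) : ℂ) * ((-1 : ℂ) ^ m *
        (Stmt7.ent b 1 1 (L E00) - Stmt7.ent b 0 0 (L E00))) = 0 := by
      linear_combination -e201
    have h3 : ((m + 1 : ℕ) : ℂ) ≠ 0 := Nat.cast_ne_zero.2 (Nat.succ_ne_zero m)
    have h4 : ((-1 : ℂ) ^ m) ≠ 0 := pow_ne_zero _ (by norm_num)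
    rcases mul_eq_zero.1 h2 with h | h
    · exact absurd h h3
    · rcases mul_eq_zero.1 h with h' | h'
      · exact absurd h' h4
      · linear_combination -h'
  -- ================= Identity 4 : tuple (E00, E11, ..., E11) ==============
  have id4 := hL (fun i : Fin (m + 2) => if (i : ℕ) = 0 then E00 else E11)
  beta_reduce at id4
  rw [show (commPoly (m + 2) fun i : Fin (m + 2) => if (i : ℕ) = 0 then E00 else E11)
      = 0 by
    apply Subtype.ext
    rw [Stmt7.cp_headtail_coe, hE00coe, hE11coe, ZeroMemClass.coe_zero]
    exact Stmt7.iter11_e00 b m] at id4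
  rw [map_zero] at id4
  rw [Stmt7.sum_update_headtail] at id4
  rw [hE00coe, hE11coe] at id4
  rw [Finset.sum_congr rfl (fun (j : Fin (m + 1)) _ => show
      (Stmt7.stp (Stmt7.eM b 1 1))^[m - (j : ℕ)]
        (Stmt7.stp (L E11) ((Stmt7.stp (Stmt7.eM b 1 1))^[(j : ℕ)] (Stmt7.eM b 0 0)))
      = if j = 0 then (Stmt7.stp (Stmt7.eM b 1 1))^[m]
          (Stmt7.stp (L E11) (Stmt7.eM b 0 0)) else 0 by
    by_cases hj : (j : ℕ) = 0
    · rw [hj, if_pos (Fin.ext (by simp [hj]))]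
      simp
    · obtain ⟨p, hp⟩ : ∃ p, (j : ℕ) = p + 1 := ⟨(j : ℕ) - 1, by omega⟩
      rw [hp, if_neg (by intro h; rw [h] at hp; simp at hp), Stmt7.iter11_e00 b p,
        Stmt7.stp_zero, Stmt7.stp_iter_zero])] at id4
  rw [Finset.sum_ite_eq' Finset.univ (0 : Fin (m + 1))] at id4
  simp only [Finset.mem_univ, if_true] at id4
  -- entry (0,1)
  have e401 := congrArg (fun W => Stmt7.ent b 0 1 W) id4
  simp only [map_add, map_zero] at e401
  rw [Stmt7.ent01_iter11, Stmt7.ent01_iter11] at e401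
  have F6 : Stmt7.ent b 0 1 (L E00) + Stmt7.ent b 0 1 (L E11) = 0 := by
    have h : Stmt7.ent b 0 1 (Stmt7.stp (L E11) (Stmt7.eM b 0 0))
        = Stmt7.ent b 0 1 (L E11) := by
      simp [Stmt7.stp, map_sub, Stmt7.ent_eM_mul, Stmt7.ent_mul_eM]
    rw [h] at e401
    linear_combination -e401
  -- entry (1,0)
  have e410 := congrArg (fun W => Stmt7.ent b 1 0 W) id4
  simp only [map_add, map_zero] at e410
  rw [Stmt7.ent10_iter11, Stmt7.ent10_iter11] at e410
  have F5 : Stmt7.ent b 1 0 (L E00) + Stmt7.ent b 1 0 (L E11) = 0 := by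
    have h : Stmt7.ent b 1 0 (Stmt7.stp (L E11) (Stmt7.eM b 0 0))
        = -Stmt7.ent b 1 0 (L E11) := by
      simp [Stmt7.stp, map_sub, Stmt7.ent_eM_mul, Stmt7.ent_mul_eM]
    rw [h] at e410
    linear_combination ((-1:ℂ)^m) * e410
      - (Stmt7.ent b 1 0 (L E00) + Stmt7.ent b 1 0 (L E11)) * hu1
  -- ================= Identity 3 : tuple (E01, E11, ..., E11, E01) =========
  have id3 := hL (fun i : Fin (m + 2) =>
    if (i : ℕ) = 0 then E01 else if (i : ℕ) = m + 1 then E01 else E11)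
  beta_reduce at id3
  rw [show (commPoly (m + 2) fun i : Fin (m + 2) =>
      if (i : ℕ) = 0 then E01 else if (i : ℕ) = m + 1 then E01 else E11) = 0 by
    apply Subtype.ext
    rw [Stmt7.cp_t3_coe, hE01coe, hE11coe, ZeroMemClass.coe_zero,
      Stmt7.iter11_e01 b m]
    simp [Stmt7.stp]] at id3
  rw [map_zero] at id3
  rw [Stmt7.sum_update_t3] at id3
  rw [hE01coe, hE11coe] at id3
  simp only [Stmt7.iter11_e01 b] at id3
  have e300 := congrArg (fun W => Stmt7.ent b 0 0 W) id3
  simp only [map_add, map_sum, map_zero] at e300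
  rw [Stmt7.ent00_stp01, Stmt7.ent10_iter11] at e300
  rw [Finset.sum_congr rfl (fun (j : Fin (m + 1)) _ => show
      Stmt7.ent b 0 0 (if (j : ℕ) = m then Stmt7.stp (L E01) (Stmt7.eM b 0 1)
        else Stmt7.stp (Stmt7.eM b 0 1) ((Stmt7.stp (Stmt7.eM b 1 1))^[m - 1 - (j : ℕ)]
          (Stmt7.stp (L E11) (Stmt7.eM b 0 1))))
      = if j = Fin.last m then Stmt7.ent b 1 0 (L E01) else 0 by
    by_cases hj : (j : ℕ) = m
    · rw [if_pos hj, if_pos (Fin.ext (by simp [hj]))]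
      simp [Stmt7.stp, map_sub, Stmt7.ent_eM_mul, Stmt7.ent_mul_eM]
    · rw [if_neg hj, if_neg (by simp [Fin.ext_iff]; omega)]
      rw [Stmt7.ent00_stp01, Stmt7.ent10_iter11]
      have h : Stmt7.ent b 1 0 (Stmt7.stp (L E11) (Stmt7.eM b 0 1)) = 0 := by
        simp [Stmt7.stp, map_sub, Stmt7.ent_eM_mul, Stmt7.ent_mul_eM]
      rw [h, mul_zero, neg_zero])] at e300
  rw [Finset.sum_ite_eq' Finset.univ (Fin.last m)
      (fun _ => Stmt7.ent b 1 0 (L E01))] at e300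
  simp only [Finset.mem_univ, if_true] at e300
  -- e300 : 0 = -((-1)^m * ent10 (L E01)) + ent10 (L E01)
  have F7 : Stmt7.ent b 1 0 (L E01) = 0 := by
    linear_combination e110 / 2 - e300 / 2
  -- ================= Construction of D and H ==============
  obtain ⟨Tv, hTv⟩ : ∃ T : X →L[ℂ] X, T =
      Stmt7.ent b 0 1 (L E01) • Stmt7.eM b 0 0
      + (-Stmt7.ent b 0 1 (L E00)) • Stmt7.eM b 0 1
      + Stmt7.ent b 1 0 (L E00) • Stmt7.eM b 1 0 := ⟨_, rfl⟩
  obtain ⟨D, hD⟩ : ∃ D : ↥(nestAlgebra 𝒩) →ₗ[ℂ] (X →L[ℂ] X), D =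
      (LinearMap.mulLeft ℂ Tv - LinearMap.mulRight ℂ Tv).comp
        (nestAlgebra 𝒩).val.toLinearMap := ⟨_, rfl⟩
  have hDapp : ∀ v : ↥(nestAlgebra 𝒩), D v = Tv * ↑v - ↑v * Tv := by
    intro v
    rw [hD]
    simp [LinearMap.mulLeft_apply, LinearMap.mulRight_apply]
  obtain ⟨H, hH⟩ : ∃ H' : ↥(nestAlgebra 𝒩) →ₗ[ℂ] (X →L[ℂ] X), H' = L - D := ⟨_, rfl⟩
  have hHapp : ∀ v : ↥(nestAlgebra 𝒩), H v = L v - D v := by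
    intro v; rw [hH]; rfl
  have hDer : IsDerivOn (nestAlgebra 𝒩) D := by
    intro u v
    rw [hDapp, hDapp, hDapp, MulMemClass.coe_mul]
    noncomm_ring
  have hH00 : H E00 = Stmt7.ent b 0 0 (L E00) • (1 : X →L[ℂ] X) := by
    rw [hHapp, hDapp, hTv, hE00coe]
    apply Stmt7.ext_ent b
    intro i j
    fin_cases i <;> fin_cases j
    · simp [map_sub, map_add, map_smul, smul_eq_mul, add_mul, mul_add,
        Algebra.smul_mul_assoc, Algebra.mul_smul_comm, Stmt7.eM_mul, Stmt7.ent_eM,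
        Stmt7.ent_one]
    · simp [map_sub, map_add, map_smul, smul_eq_mul, add_mul, mul_add,
        Algebra.smul_mul_assoc, Algebra.mul_smul_comm, Stmt7.eM_mul, Stmt7.ent_eM,
        Stmt7.ent_one]
    · simp [map_sub, map_add, map_smul, smul_eq_mul, add_mul, mul_add,
        Algebra.smul_mul_assoc, Algebra.mul_smul_comm, Stmt7.eM_mul, Stmt7.ent_eM,
        Stmt7.ent_one]
    · simp only [map_sub, map_add, map_smul, smul_eq_mul, add_mul, mul_add,
        Algebra.smul_mul_assoc, Algebra.mul_smul_comm, Stmt7.eM_mul, Stmt7.ent_eM,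
        Stmt7.ent_one]
      simp [Stmt7.ent_eM, Stmt7.ent_one]
      linear_combination -F1
  have hH01 : H E01 = 0 := by
    rw [hHapp, hDapp, hTv, hE01coe]
    apply Stmt7.ext_ent b
    intro i j
    fin_cases i <;> fin_cases j
    · simp only [map_sub, map_add, map_smul, smul_eq_mul, add_mul, mul_add,
        Algebra.smul_mul_assoc, Algebra.mul_smul_comm, Stmt7.eM_mul, Stmt7.ent_eM,
        Stmt7.ent_one, map_zero]
      simp [Stmt7.ent_eM, Stmt7.ent_one]
      linear_combination F3
    · simp [map_sub, map_add, map_smul, smul_eq_mul, add_mul, mul_add,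
        Algebra.smul_mul_assoc, Algebra.mul_smul_comm, Stmt7.eM_mul, Stmt7.ent_eM,
        Stmt7.ent_one]
    · simp only [map_sub, map_add, map_smul, smul_eq_mul, add_mul, mul_add,
        Algebra.smul_mul_assoc, Algebra.mul_smul_comm, Stmt7.eM_mul, Stmt7.ent_eM,
        Stmt7.ent_one, map_zero]
      simp [Stmt7.ent_eM, Stmt7.ent_one]
      linear_combination F7
    · simp only [map_sub, map_add, map_smul, smul_eq_mul, add_mul, mul_add,
        Algebra.smul_mul_assoc, Algebra.mul_smul_comm, Stmt7.eM_mul, Stmt7.ent_eM,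
        Stmt7.ent_one, map_zero]
      simp [Stmt7.ent_eM, Stmt7.ent_one]
      linear_combination e111 - F5
  have hH11 : H E11 = Stmt7.ent b 0 0 (L E11) • (1 : X →L[ℂ] X) := by
    rw [hHapp, hDapp, hTv, hE11coe]
    apply Stmt7.ext_ent b
    intro i j
    fin_cases i <;> fin_cases j
    · simp [map_sub, map_add, map_smul, smul_eq_mul, add_mul, mul_add,
        Algebra.smul_mul_assoc, Algebra.mul_smul_comm, Stmt7.eM_mul, Stmt7.ent_eM,
        Stmt7.ent_one]
    · simp only [map_sub, map_add, map_smul, smul_eq_mul, add_mul, mul_add,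
        Algebra.smul_mul_assoc, Algebra.mul_smul_comm, Stmt7.eM_mul, Stmt7.ent_eM,
        Stmt7.ent_one]
      simp [Stmt7.ent_eM, Stmt7.ent_one]
      linear_combination F6
    · simp only [map_sub, map_add, map_smul, smul_eq_mul, add_mul, mul_add,
        Algebra.smul_mul_assoc, Algebra.mul_smul_comm, Stmt7.eM_mul, Stmt7.ent_eM,
        Stmt7.ent_one]
      simp [Stmt7.ent_eM, Stmt7.ent_one]
      linear_combination F5
    · simp only [map_sub, map_add, map_smul, smul_eq_mul, add_mul, mul_add,
        Algebra.smul_mul_assoc, Algebra.mul_smul_comm, Stmt7.eM_mul, Stmt7.ent_eM,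
        Stmt7.ent_one]
      simp [Stmt7.ent_eM, Stmt7.ent_one]
      linear_combination -F2
  have hdecomp : ∀ v : ↥(nestAlgebra 𝒩), v
      = Stmt7.ent b 0 0 (v : X →L[ℂ] X) • E00
        + Stmt7.ent b 0 1 (v : X →L[ℂ] X) • E01
        + Stmt7.ent b 1 1 (v : X →L[ℂ] X) • E11 := by
    intro v
    have h10 : Stmt7.ent b 1 0 (v : X →L[ℂ] X) = 0 := (memA_iff _).1 v.2
    apply Subtype.ext
    rw [Subalgebra.coe_add, Subalgebra.coe_add, SetLike.val_smul, SetLike.val_smul,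
      SetLike.val_smul, hE00coe, hE01coe, hE11coe]
    apply Stmt7.ext_ent b
    intro i j
    fin_cases i <;> fin_cases j <;>
      simp [map_add, map_smul, Stmt7.ent_eM, smul_eq_mul, h10]
  have hscal : ∀ v : ↥(nestAlgebra 𝒩), ∃ c : ℂ, H v = c • (1 : X →L[ℂ] X) := by
    intro v
    refine ⟨Stmt7.ent b 0 0 (v : X →L[ℂ] X) * Stmt7.ent b 0 0 (L E00)
      + Stmt7.ent b 1 1 (v : X →L[ℂ] X) * Stmt7.ent b 0 0 (L E11), ?_⟩
    conv_lhs => rw [hdecomp v]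
    rw [map_add, map_add, map_smul, map_smul, map_smul, hH00, hH01, hH11,
      smul_zero, add_zero, smul_smul, smul_smul, ← add_smul]
  have hcommut : ∀ u v : ↥(nestAlgebra 𝒩), ∃ c : ℂ, u * v - v * u = c • E01 := by
    intro u v
    have h10u : Stmt7.ent b 1 0 (u : X →L[ℂ] X) = 0 := (memA_iff _).1 u.2
    have h10v : Stmt7.ent b 1 0 (v : X →L[ℂ] X) = 0 := (memA_iff _).1 v.2
    refine ⟨Stmt7.ent b 0 1
      ((u : X →L[ℂ] X) * (v : X →L[ℂ] X) - (v : X →L[ℂ] X) * (u : X →L[ℂ] X)), ?_⟩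
    apply Subtype.ext
    rw [Subalgebra.coe_sub, MulMemClass.coe_mul, MulMemClass.coe_mul,
      SetLike.val_smul, hE01coe]
    apply Stmt7.ext_ent b
    intro i j
    fin_cases i <;> fin_cases j <;>
      simp [map_sub, map_smul, Stmt7.ent_mul, Stmt7.ent_eM, smul_eq_mul, h10u, h10v] <;>
      ring
  have hspan : ∀ (p : ℕ) (a : Fin (p + 2) → ↥(nestAlgebra 𝒩)),
      ∃ c : ℂ, commPoly (p + 2) a = c • E01 := by
    intro p
    induction p with
    | zero =>
      intro a
      obtain ⟨c, hc⟩ := hcommut (a 0) (a 1)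
      exact ⟨c, by rw [← hc]; rfl⟩
    | succ p ih =>
      intro a
      obtain ⟨c, hc⟩ := ih (fun i => a i.castSucc)
      obtain ⟨c', hc'⟩ := hcommut E01 (a (Fin.last (p + 2)))
      refine ⟨c * c', ?_⟩
      have h : commPoly (p + 2 + 1) a
          = commPoly (p + 2) (fun i => a i.castSucc) * a (Fin.last (p + 2))
            - a (Fin.last (p + 2)) * commPoly (p + 2) (fun i => a i.castSucc) := rfl
      rw [h, hc, smul_mul_assoc, mul_smul_comm, ← smul_sub, hc', smul_smul]
  have hvan : ∀ a : Fin (m + 2) → ↥(nestAlgebra 𝒩), H (commPoly (m + 2) a) = 0 := by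
    intro a
    obtain ⟨c, hc⟩ := hspan m a
    rw [hc, map_smul, hH01, smul_zero]
  have hLDH : L = D + H := by
    apply LinearMap.ext
    intro v
    rw [LinearMap.add_apply, hHapp]
    abel
  have hDcont : Continuous D := by
    have hce : ⇑D = fun v : ↥(nestAlgebra 𝒩) => Tv * ↑v - ↑v * Tv := funext hDapp
    rw [hce]
    exact (continuous_const.mul continuous_subtype_val).sub
      (continuous_subtype_val.mul continuous_const)
  refine ⟨⟨D, H, hDer, hscal, hvan, hLDH⟩, fun hLc => ⟨D, H, hDer, hscal, hvan, hLDH,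
    hDcont, ?_⟩⟩
  have hce : ⇑H = fun v : ↥(nestAlgebra 𝒩) => L v - D v := funext hHapp
  rw [hce]
  exact hLc.sub hDcont

/-- Let `X` be a complex Banach space with `dim X = 2` and let
`𝒩 = {{0}, N, X}` be a non-trivial nest on `X`.  Then for every `n ≥ 2`, every Lie
`n`-derivation `L : Alg 𝒩 → B(X)` decomposes as `L = D + H` with `D` a derivation and
`H` a linear map into `ℂ I` vanishing on all `(n-1)`-th commutators; moreover, if `L`
is continuous then `D, H` can be chosen continuous. -/
theorem statement7 {X : Type*} [NormedAddCommGroup X] [NormedSpace ℂ X] [CompleteSpace X]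
    (hdim : Module.rank ℂ X = 2)
    (𝒩 : Set (Submodule ℂ X)) (hnest : IsNest 𝒩)
    (N : Submodule ℂ X) (h𝒩 : 𝒩 = ({⊥, N, ⊤} : Set (Submodule ℂ X)))
    (hNbot : N ≠ ⊥) (hNtop : N ≠ ⊤)
    (n : ℕ) (hn : 2 ≤ n)
    (L : ↥(nestAlgebra 𝒩) →ₗ[ℂ] (X →L[ℂ] X))
    (hL : IsLieNDeriv (nestAlgebra 𝒩) n L) :
    (∃ D H : ↥(nestAlgebra 𝒩) →ₗ[ℂ] (X →L[ℂ] X),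
        IsDerivOn (nestAlgebra 𝒩) D ∧
        (∀ a : ↥(nestAlgebra 𝒩), ∃ c : ℂ, H a = c • (1 : X →L[ℂ] X)) ∧
        (∀ a : Fin n → ↥(nestAlgebra 𝒩), H (commPoly n a) = 0) ∧
        L = D + H) ∧
    (Continuous L →
      ∃ D H : ↥(nestAlgebra 𝒩) →ₗ[ℂ] (X →L[ℂ] X),
        IsDerivOn (nestAlgebra 𝒩) D ∧
        (∀ a : ↥(nestAlgebra 𝒩), ∃ c : ℂ, H a = c • (1 : X →L[ℂ] X)) ∧
        (∀ a : Fin n → ↥(nestAlgebra 𝒩), H (commPoly n a) = 0) ∧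
        L = D + H ∧ Continuous D ∧ Continuous H) :=
  statement7_aux hdim 𝒩 hnest N h𝒩 hNbot hNtop n hn L hL
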